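/- Let e₁ = (1,0), e₂ = (0,1) in ℤ², let ρ, a₁, a₂ ∈ ℝ, and let g : ℤ² → ℝ be finitely supported. Define Ag : ℤ² → ℝ by: (Ag)(0) = 0; (Ag)(x) = −ρ·a₁·(g(x+e₁) − g(x−e₁)) − ρ·a₂·(g(x+e₂) − g(x−e₂)) for x ∉ {0, e₁, −e₁, e₂, −e₂}; (Ag)(e₁) = −ρ·a₁·(g(2e₁) − g(−e₁)) − ρ·a₂·(g(e₁+e₂) − g(e₁−e₂)); (Ag)(−e₁) = ρ·a₁·(g(−2e₁) − g(e₁)) − ρ·a₂·(g(−e₁+e₂) − g(−e₁−e₂)); (Ag)(e₂) = −ρ·a₂·(g(2e₂) − g(−e₂)) − ρ·a₁·(g(e₂+e₁) − g(e₂−e₁)); (Ag)(−e₂) = ρ·a₂·(g(−2e₂) − g(e₂)) − ρ·a₁·(g(−e₂+e₁) − g(−e₂−e₁)). Then for all v₁, v₂ ∈ ℝ, writing ĥ(v) = ∑_{x∈ℤ²} e^{2πi(x₁v₁+x₂v₂)}·h(x) and γ(r) = e^{2πir} − e^{−2πir}, one has: (Ag)^(v) = ρ·(a₁·γ(v₁)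 + a₂·γ(v₂))·ĝ(v) − ρ·a₁·(e^{−2πiv₁} − 1)·g(e₁) + ρ·a₁·(e^{2πiv₁} − 1)·g(−e₁) − ρ·a₂·(e^{−2πiv₂} − 1)·g(e₂) + ρ·a₂·(e^{2πiv₂} − 1)·g(−e₂) − ρ·(a₁·γ(v₁) + a₂·γ(v₂))·g(0). -/

import Mathlib

open Real

/-- Fourier transform on `ℤ²` of a finitely supported function. -/
noncomputable def ftZ2 (h : ℤ × ℤ → ℝ) (v₁ v₂ : ℝ) : ℂ :=
  ∑ᶠ x : ℤ × ℤ,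
    Complex.exp (2 * (π : ℂ) * Complex.I * ((x.1 : ℂ) * (v₁ : ℂ) + (x.2 : ℂ) * (v₂ : ℂ))) *
      (h x : ℂ)

/-- `γ(r) = e^{2πir} − e^{−2πir}`. -/
noncomputable def gam (r : ℝ) : ℂ :=
  Complex.exp (2 * (π : ℂ) * Complex.I * (r : ℂ)) -
    Complex.exp (-(2 * (π : ℂ) * Complex.I * (r : ℂ)))

/-- The degree-preserving part `Ā_{nn;1,1}` of the antisymmetric nearest-neighbor
coefficient operator in `d = 2`. -/
def Aop (ρ a₁ a₂ : ℝ) (g : ℤ × ℤ → ℝ) : ℤ × ℤ → ℝ := fun x =>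
  if x = (0, 0) then 0
  else if x = (1, 0) then
    -ρ * a₁ * (g (2, 0) - g (-1, 0)) - ρ * a₂ * (g (1, 1) - g (1, -1))
  else if x = (-1, 0) then
    ρ * a₁ * (g (-2, 0) - g (1, 0)) - ρ * a₂ * (g (-1, 1) - g (-1, -1))
  else if x = (0, 1) then
    -ρ * a₂ * (g (0, 2) - g (0, -1)) - ρ * a₁ * (g (1, 1) - g (-1, 1))
  else if x = (0, -1) then
    ρ * a₂ * (g (0, -2) - g (0, 1)) - ρ * a₁ * (g (1, -1) - g (-1, -1))
  else
    -ρ * a₁ * (g (x.1 + 1, x.2) - g (x.1 - 1, x.2)) -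
      ρ * a₂ * (g (x.1, x.2 + 1) - g (x.1, x.2 - 1))

open Function

noncomputable def ep (v₁ v₂ : ℝ) (x : ℤ × ℤ) : ℂ :=
  Complex.exp (2 * (π : ℂ) * Complex.I * ((x.1 : ℂ) * (v₁ : ℂ) + (x.2 : ℂ) * (v₂ : ℂ)))

lemma ep_add (v₁ v₂ : ℝ) (x y : ℤ × ℤ) :
    ep v₁ v₂ (x + y) = ep v₁ v₂ x * ep v₁ v₂ y := by
  simp only [ep, ← Complex.exp_add]
  congr 1
  push_cast [Prod.fst_add, Prod.snd_add]
  ring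

lemma hsupp_shift (v₁ v₂ : ℝ) {g : ℤ × ℤ → ℝ} (hg : (support g).Finite) (e : ℤ × ℤ) :
    (support fun x : ℤ × ℤ => ep v₁ v₂ x * (g (x + e) : ℂ)).Finite := by
  refine (hg.preimage ((add_left_injective e).injOn)).subset ?_
  intro x hx
  simp only [mem_support, ne_eq] at hx ⊢
  intro h
  exact hx (by simp [h])

lemma ft_shift (v₁ v₂ : ℝ) {g : ℤ × ℤ → ℝ} (hg : (support g).Finite) (e : ℤ × ℤ) :
    ∑ᶠ x : ℤ × ℤ, ep v₁ v₂ x * (g (x + e) : ℂ) =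
      ep v₁ v₂ (-e) * ∑ᶠ x : ℤ × ℤ, ep v₁ v₂ x * (g x : ℂ) := by
  have hinv : ep v₁ v₂ (-e) * ep v₁ v₂ e = 1 := by
    rw [← ep_add]; simp [ep]
  have h1 : ∀ x : ℤ × ℤ,
      ep v₁ v₂ x * (g (x + e) : ℂ) =
        (fun y : ℤ × ℤ => ep v₁ v₂ (-e) * (ep v₁ v₂ y * (g y : ℂ))) (Equiv.addRight e x) := by
    intro x
    simp only [Equiv.coe_addRight, ep_add, ← mul_assoc]
    rw [show ep v₁ v₂ (-e) * ep v₁ v₂ x * ep v₁ v₂ e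
        = (ep v₁ v₂ (-e) * ep v₁ v₂ e) * ep v₁ v₂ x by ring, hinv, one_mul]
  calc ∑ᶠ x : ℤ × ℤ, ep v₁ v₂ x * (g (x + e) : ℂ)
      = ∑ᶠ x : ℤ × ℤ, (fun y : ℤ × ℤ => ep v₁ v₂ (-e) * (ep v₁ v₂ y * (g y : ℂ)))
          (Equiv.addRight e x) := finsum_congr h1
    _ = ∑ᶠ y : ℤ × ℤ, ep v₁ v₂ (-e) * (ep v₁ v₂ y * (g y : ℂ)) :=
        finsum_comp_equiv
          (f := fun y : ℤ × ℤ => ep v₁ v₂ (-e) * (ep v₁ v₂ y * (g y : ℂ))) (Equiv.addRight e)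
    _ = ep v₁ v₂ (-e) * ∑ᶠ y : ℤ × ℤ, ep v₁ v₂ y * (g y : ℂ) :=
        (mul_finsum' _ _ (hsupp_shift v₁ v₂ hg 0 |>.subset (by simp))).symm

def Cfun (ρ a₁ a₂ : ℝ) (g : ℤ × ℤ → ℝ) : ℤ × ℤ → ℝ := fun x =>
  if x = (0, 0) then ρ * a₁ * (g (1, 0) - g (-1, 0)) + ρ * a₂ * (g (0, 1) - g (0, -1))
  else if x = (1, 0) then -ρ * a₁ * (g (0, 0) - g (-1, 0))
  else if x = (-1, 0) then ρ * a₁ * (g (0, 0) - g (1, 0))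
  else if x = (0, 1) then -ρ * a₂ * (g (0, 0) - g (0, -1))
  else if x = (0, -1) then ρ * a₂ * (g (0, 0) - g (0, 1))
  else 0

set_option linter.unnecessarySeqFocus false in
lemma Aop_decomp (ρ a₁ a₂ : ℝ) (g : ℤ × ℤ → ℝ) (x : ℤ × ℤ) :
    Aop ρ a₁ a₂ g x =
      -ρ * a₁ * g (x + (1, 0)) + ρ * a₁ * g (x + (-1, 0))
        + (-ρ * a₂ * g (x + (0, 1)) + (ρ * a₂ * g (x + (0, -1)) + Cfun ρ a₁ a₂ g x)) := by
  have h1 : x + ((1 : ℤ), (0 : ℤ)) = (x.1 + 1, x.2) := by ext <;> simp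
  have h2 : x + ((-1 : ℤ), (0 : ℤ)) = (x.1 - 1, x.2) := by ext <;> simp <;> ring
  have h3 : x + ((0 : ℤ), (1 : ℤ)) = (x.1, x.2 + 1) := by ext <;> simp
  have h4 : x + ((0 : ℤ), (-1 : ℤ)) = (x.1, x.2 - 1) := by ext <;> simp <;> ring
  rw [h1, h2, h3, h4]
  unfold Aop Cfun
  split_ifs with h0 he1 hm1 he2 hm2 <;> subst_vars <;> try norm_num
  all_goals ring

lemma finsum_add5 {α M : Type*} [AddCommMonoid M] (f1 f2 f3 f4 f5 : α → M)
    (h1 : (support f1).Finite) (h2 : (support f2).Finite) (h3 : (support f3).Finite)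
    (h4 : (support f4).Finite) (h5 : (support f5).Finite) :
    ∑ᶠ x, (f1 x + f2 x + (f3 x + (f4 x + f5 x))) =
      (∑ᶠ x, f1 x) + (∑ᶠ x, f2 x) + ((∑ᶠ x, f3 x) + ((∑ᶠ x, f4 x) + ∑ᶠ x, f5 x)) := by
  have h45 : (support fun x => f4 x + f5 x).Finite :=
    (h4.union h5).subset (support_add _ _)
  have h345 : (support fun x => f3 x + (f4 x + f5 x)).Finite :=
    (h3.union h45).subset (support_add _ _)
  have h12 : (support fun x => f1 x + f2 x).Finite :=
    (h1.union h2).subset (support_add _ _)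
  rw [finsum_add_distrib h12 h345, finsum_add_distrib h1 h2, finsum_add_distrib h3 h45,
    finsum_add_distrib h4 h5]

theorem stmt_18 (ρ a₁ a₂ : ℝ) (g : ℤ × ℤ → ℝ) (hg : (Function.support g).Finite)
    (v₁ v₂ : ℝ) :
    ftZ2 (Aop ρ a₁ a₂ g) v₁ v₂ =
      (ρ : ℂ) * ((a₁ : ℂ) * gam v₁ + (a₂ : ℂ) * gam v₂) * ftZ2 g v₁ v₂
        - (ρ : ℂ) * (a₁ : ℂ) *
            (Complex.exp (-(2 * (π : ℂ) * Complex.I * (v₁ : ℂ))) - 1) * (g (1, 0) : ℂ)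
        + (ρ : ℂ) * (a₁ : ℂ) *
            (Complex.exp (2 * (π : ℂ) * Complex.I * (v₁ : ℂ)) - 1) * (g (-1, 0) : ℂ)
        - (ρ : ℂ) * (a₂ : ℂ) *
            (Complex.exp (-(2 * (π : ℂ) * Complex.I * (v₂ : ℂ))) - 1) * (g (0, 1) : ℂ)
        + (ρ : ℂ) * (a₂ : ℂ) *
            (Complex.exp (2 * (π : ℂ) * Complex.I * (v₂ : ℂ)) - 1) * (g (0, -1) : ℂ)
        - (ρ : ℂ) * ((a₁ : ℂ) * gam v₁ + (a₂ : ℂ) * gam v₂) * (g (0, 0) : ℂ) := by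
  have hft : ∀ h : ℤ × ℤ → ℝ, ftZ2 h v₁ v₂ = ∑ᶠ x : ℤ × ℤ, ep v₁ v₂ x * (h x : ℂ) :=
    fun h => rfl
  -- scaled shifted summands have finite support
  have hfin : ∀ (c : ℂ) (e : ℤ × ℤ),
      (support fun x : ℤ × ℤ => c * (ep v₁ v₂ x * (g (x + e) : ℂ))).Finite := by
    intro c e
    refine (hsupp_shift v₁ v₂ hg e).subset fun x hx => ?_
    simp only [mem_support, ne_eq] at hx ⊢
    exact fun h => hx (by rw [h, mul_zero])
  -- the correction term's support
  have hCsub : (support fun x : ℤ × ℤ => ep v₁ v₂ x * (Cfun ρ a₁ a₂ g x : ℂ)) ⊆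
      (↑({((0 : ℤ), (0 : ℤ)), (1, 0), (-1, 0), (0, 1), (0, -1)} : Finset (ℤ × ℤ))) := by
    intro x hx
    simp only [mem_support, ne_eq] at hx
    by_contra hxS
    simp only [Finset.coe_insert, Set.mem_insert_iff, Finset.coe_singleton,
      Set.mem_singleton_iff, not_or] at hxS
    obtain ⟨n0, n1, n2, n3, n4⟩ := hxS
    refine hx ?_
    rw [Cfun]
    simp only [if_neg n0, if_neg n1, if_neg n2, if_neg n3, if_neg n4]
    simp
  have hCfin : (support fun x : ℤ × ℤ => ep v₁ v₂ x * (Cfun ρ a₁ a₂ g x : ℂ)).Finite :=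
    Set.Finite.subset (Finset.finite_toSet _) hCsub
  -- pointwise decomposition of the summand
  have key : ∀ x : ℤ × ℤ, ep v₁ v₂ x * (Aop ρ a₁ a₂ g x : ℂ) =
      (-(ρ : ℂ) * a₁) * (ep v₁ v₂ x * (g (x + (1, 0)) : ℂ))
        + ((ρ : ℂ) * a₁) * (ep v₁ v₂ x * (g (x + (-1, 0)) : ℂ))
        + ((-(ρ : ℂ) * a₂) * (ep v₁ v₂ x * (g (x + (0, 1)) : ℂ))
          + (((ρ : ℂ) * a₂) * (ep v₁ v₂ x * (g (x + (0, -1)) : ℂ))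
            + ep v₁ v₂ x * (Cfun ρ a₁ a₂ g x : ℂ))) := by
    intro x
    rw [Aop_decomp]
    push_cast
    ring
  rw [hft, finsum_congr key,
    finsum_add5 _ _ _ _ _ (hfin _ _) (hfin _ _) (hfin _ _) (hfin _ _) hCfin,
    ← mul_finsum' _ _ (hsupp_shift v₁ v₂ hg (1, 0)),
    ← mul_finsum' _ _ (hsupp_shift v₁ v₂ hg (-1, 0)),
    ← mul_finsum' _ _ (hsupp_shift v₁ v₂ hg (0, 1)),
    ← mul_finsum' _ _ (hsupp_shift v₁ v₂ hg (0, -1)),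
    ft_shift v₁ v₂ hg (1, 0), ft_shift v₁ v₂ hg (-1, 0),
    ft_shift v₁ v₂ hg (0, 1), ft_shift v₁ v₂ hg (0, -1),
    finsum_eq_sum_of_support_subset _ hCsub]
  rw [← hft g]
  rw [Finset.sum_insert (by decide), Finset.sum_insert (by decide),
    Finset.sum_insert (by decide), Finset.sum_insert (by decide), Finset.sum_singleton]
  simp only [Cfun, if_pos rfl]
  norm_num [Prod.ext_iff]
  simp only [ep, gam, show ((0, 0) : ℤ × ℤ) = 0 from rfl, Prod.fst_zero, Prod.snd_zero,
    Int.cast_zero, zero_mul, add_zero, mul_zero, Complex.exp_zero, one_mul]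
  push_cast
  ring_nf
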